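/- Let ≿₁ and ≿₂ be two niveloidal preferences on 𝓕 with utility indices u₁, u₂ and maximal grounded subsets C₁*, B₁* and C₂*, B₂* of 𝒞. Then the following are equivalent: (i) ≿₁ is more ambiguity averse than ≿₂ (i.e., for all f ∈ 𝓕 and x ∈ X, x ≿₂ f implies x ≿₁ f); (ii) u₁ and u₂ are positive affine transformations of each other and, after normalizing so that u₁ = u₂, C₁* ⊆ C₂*; (iii) u₁ and u₂ are positive affine transformations of each other and, after normalizing so that u₁ = u₂, B₁* ⊇ B₂*. -/

import Mathlib

open scoped Pointwise
open MeasureTheory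

namespace Paper

variable {S V : Type*}

/-- An algebra of subsets of `S` (the events `Σ`). -/
structure IsSetAlg (𝓐 : Set (Set S)) : Prop where
  empty_mem : ∅ ∈ 𝓐
  compl_mem : ∀ A ∈ 𝓐, Aᶜ ∈ 𝓐
  union_mem : ∀ A ∈ 𝓐, ∀ B ∈ 𝓐, A ∪ B ∈ 𝓐

/-- `B₀(Σ)`: real-valued `Σ`-measurable simple functions. -/
def IsSimpleFn (𝓐 : Set (Set S)) (φ : S → ℝ) : Prop :=
  (Set.range φ).Finite ∧ ∀ t : ℝ, φ ⁻¹' {t} ∈ 𝓐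

open Classical in
/-- The integral of a simple function with respect to a finitely additive set function. -/
noncomputable def fint (p : Set S → ℝ) (φ : S → ℝ) : ℝ :=
  if h : (Set.range φ).Finite then ∑ t ∈ h.toFinset, t * p (φ ⁻¹' {t}) else 0

/-- `Δ`: the finitely additive probabilities on `Σ` (canonically extended by `0` off `Σ`). -/
def Δset (𝓐 : Set (Set S)) : Set (Set S → ℝ) :=
  {p | p Set.univ = 1 ∧ (∀ A ∈ 𝓐, 0 ≤ p A) ∧
    (∀ A ∈ 𝓐, ∀ B ∈ 𝓐, Disjoint A B → p (A ∪ B) = p A + p B) ∧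
    ∀ A : Set S, A ∉ 𝓐 → p A = 0}

/-- The weak* topology `σ(Δ, B₀(Σ))`, i.e. the topology induced by the evaluation maps
`p ↦ ∫ φ dp`, `φ ∈ B₀(Σ)`. -/
noncomputable def weakStar (𝓐 : Set (Set S)) : TopologicalSpace (Set S → ℝ) :=
  TopologicalSpace.induced
    (fun p => fun φ : {φ : S → ℝ // IsSimpleFn 𝓐 φ} => fint p φ.1)
    Pi.topologicalSpace

/-- `𝒞`: the weak*-lower semicontinuous convex functions `c : Δ → (-∞, ∞]`. -/
def Cscr (𝓐 : Set (Set S)) : Set ((Set S → ℝ) → EReal) :=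
  {c | (∀ p ∈ Δset 𝓐, ⊥ < c p) ∧
    (@LowerSemicontinuousOn (Set S → ℝ) EReal (weakStar 𝓐) _ c (Δset 𝓐)) ∧
    ∀ p ∈ Δset 𝓐, ∀ q ∈ Δset 𝓐, ∀ a b : ℝ, 0 ≤ a → 0 ≤ b → a + b = 1 →
      c (a • p + b • q) ≤ (a : EReal) * c p + (b : EReal) * c q}

/-- A subset `C ⊆ 𝒞` is grounded if `sup_{c ∈ C} min_{p ∈ Δ} c p = 0`. -/
def Grounded (𝓐 : Set (Set S)) (C : Set ((Set S → ℝ) → EReal)) : Prop :=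
  (⨆ c ∈ C, ⨅ p ∈ Δset 𝓐, c p) = 0

/-- `min_{p ∈ Δ} (∫ φ dp + c p)`. -/
noncomputable def minVal (𝓐 : Set (Set S)) (c : (Set S → ℝ) → EReal) (φ : S → ℝ) : EReal :=
  ⨅ p ∈ Δset 𝓐, ((fint p φ : EReal) + c p)

/-- `max_{q ∈ Δ} (∫ φ dq - b q)`. -/
noncomputable def maxVal (𝓐 : Set (Set S)) (b : (Set S → ℝ) → EReal) (φ : S → ℝ) : EReal :=
  ⨆ q ∈ Δset 𝓐, ((fint q φ : EReal) - b q)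

/-- `max_{c ∈ C} min_{p ∈ Δ} (∫ φ dp + c p)`. -/
noncomputable def maxminVal (𝓐 : Set (Set S)) (C : Set ((Set S → ℝ) → EReal))
    (φ : S → ℝ) : EReal :=
  ⨆ c ∈ C, minVal 𝓐 c φ

/-- `min_{b ∈ B} max_{q ∈ Δ} (∫ φ dq - b q)`. -/
noncomputable def minmaxVal (𝓐 : Set (Set S)) (B : Set ((Set S → ℝ) → EReal))
    (φ : S → ℝ) : EReal :=
  ⨅ b ∈ B, maxVal 𝓐 b φ

/-- `min_{p ∈ P} ∫ φ dp`. -/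
noncomputable def minPVal (P : Set (Set S → ℝ)) (φ : S → ℝ) : EReal :=
  ⨅ p ∈ P, (fint p φ : EReal)

/-- `max_{q ∈ Q} ∫ φ dq`. -/
noncomputable def maxQVal (Q : Set (Set S → ℝ)) (φ : S → ℝ) : EReal :=
  ⨆ q ∈ Q, (fint q φ : EReal)

/-- `max_{P ∈ Pfam} min_{p ∈ P} ∫ φ dp`. -/
noncomputable def maxminPVal (Pfam : Set (Set (Set S → ℝ))) (φ : S → ℝ) : EReal :=
  ⨆ P ∈ Pfam, minPVal P φ

/-- `min_{Q ∈ Qfam} max_{q ∈ Q} ∫ φ dq`. -/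
noncomputable def minmaxQVal (Qfam : Set (Set (Set S → ℝ))) (φ : S → ℝ) : EReal :=
  ⨅ Q ∈ Qfam, maxQVal Q φ

open Classical in
/-- The convex-analytic indicator `δ_P` of a set `P`. -/
noncomputable def ind (P : Set (Set S → ℝ)) : (Set S → ℝ) → EReal :=
  fun p => if p ∈ P then (0 : EReal) else ⊤

variable [AddCommGroup V] [Module ℝ V]

/-- `𝓕`: the simple acts, i.e. `Σ`-measurable maps `f : S → X` with finitely many values. -/
def Acts (𝓐 : Set (Set S)) (X : Set V) : Set (S → V) :=
  {f | (∀ s, f s ∈ X) ∧ (Set.range f).Finite ∧ ∀ v : V, f ⁻¹' {v} ∈ 𝓐}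

/-- The constant act with value `x`. -/
def constAct (x : V) : S → V := fun _ : S => x

/-- The mixture `α f + (1 - α) g` of two acts, defined statewise. -/
def mix (α : ℝ) (f g : S → V) : S → V := fun s => α • f s + (1 - α) • g s

/-- The statewise utility `u ∘ f` of an act. -/
def uAct (u : V → ℝ) (f : S → V) : S → ℝ := fun s => u (f s)

/-- `u : X → ℝ` is nonconstant and affine on `X`. -/
def IsNonconstAffine (X : Set V) (u : V → ℝ) : Prop :=
  (∀ x ∈ X, ∀ y ∈ X, ∀ t ∈ Set.Icc (0 : ℝ) 1,
      u (t • x + (1 - t) • y) = t * u x + (1 - t) * u y) ∧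
  ∃ x ∈ X, ∃ y ∈ X, u x ≠ u y

/-- A niveloidal preference: Axioms A1 (weak order), A2 (monotonicity), A3 (Archimedean)
and A4 (weak C-independence). -/
structure NiveloidalPref (𝓐 : Set (Set S)) (X : Set V)
    (R : (S → V) → (S → V) → Prop) : Prop where
  nontrivial : ∃ f ∈ Acts 𝓐 X, ∃ g ∈ Acts 𝓐 X, R f g ∧ ¬ R g f
  complete : ∀ f ∈ Acts 𝓐 X, ∀ g ∈ Acts 𝓐 X, R f g ∨ R g f
  transitive : ∀ f ∈ Acts 𝓐 X, ∀ g ∈ Acts 𝓐 X, ∀ h ∈ Acts 𝓐 X, R f g → R g h → R f h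
  monotone : ∀ f ∈ Acts 𝓐 X, ∀ g ∈ Acts 𝓐 X,
    (∀ s : S, R (constAct (f s)) (constAct (g s))) → R f g
  archimedean : ∀ f ∈ Acts 𝓐 X, ∀ g ∈ Acts 𝓐 X, ∀ h ∈ Acts 𝓐 X,
    (R f g ∧ ¬ R g f) → (R g h ∧ ¬ R h g) →
    ∃ α ∈ Set.Ioo (0 : ℝ) 1, ∃ β ∈ Set.Ioo (0 : ℝ) 1,
      (R (mix α f h) g ∧ ¬ R g (mix α f h)) ∧
      (R g (mix β f h) ∧ ¬ R (mix β f h) g)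
  weakCIndep : ∀ f ∈ Acts 𝓐 X, ∀ g ∈ Acts 𝓐 X, ∀ x ∈ X, ∀ y ∈ X,
    ∀ α ∈ Set.Ioo (0 : ℝ) 1,
    R (mix α f (constAct x)) (mix α g (constAct x)) →
    R (mix α f (constAct y)) (mix α g (constAct y))

/-- An invariant biseparable preference: Axioms A1 (weak order), A2 (monotonicity),
A3 (Archimedean) and A7 (C-independence). -/
structure IBPref (𝓐 : Set (Set S)) (X : Set V)
    (R : (S → V) → (S → V) → Prop) : Prop where
  nontrivial : ∃ f ∈ Acts 𝓐 X, ∃ g ∈ Acts 𝓐 X, R f g ∧ ¬ R g f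
  complete : ∀ f ∈ Acts 𝓐 X, ∀ g ∈ Acts 𝓐 X, R f g ∨ R g f
  transitive : ∀ f ∈ Acts 𝓐 X, ∀ g ∈ Acts 𝓐 X, ∀ h ∈ Acts 𝓐 X, R f g → R g h → R f h
  monotone : ∀ f ∈ Acts 𝓐 X, ∀ g ∈ Acts 𝓐 X,
    (∀ s : S, R (constAct (f s)) (constAct (g s))) → R f g
  archimedean : ∀ f ∈ Acts 𝓐 X, ∀ g ∈ Acts 𝓐 X, ∀ h ∈ Acts 𝓐 X,
    (R f g ∧ ¬ R g f) → (R g h ∧ ¬ R h g) →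
    ∃ α ∈ Set.Ioo (0 : ℝ) 1, ∃ β ∈ Set.Ioo (0 : ℝ) 1,
      (R (mix α f h) g ∧ ¬ R g (mix α f h)) ∧
      (R g (mix β f h) ∧ ¬ R (mix β f h) g)
  cIndep : ∀ f ∈ Acts 𝓐 X, ∀ g ∈ Acts 𝓐 X, ∀ x ∈ X, ∀ α ∈ Set.Ioo (0 : ℝ) 1,
    (R f g ↔ R (mix α f (constAct x)) (mix α g (constAct x)))

/-- Axiom A5 (uncertainty aversion). -/
def UncertaintyAverse (𝓐 : Set (Set S)) (X : Set V)
    (R : (S → V) → (S → V) → Prop) : Prop :=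
  ∀ f ∈ Acts 𝓐 X, ∀ g ∈ Acts 𝓐 X, ∀ α ∈ Set.Ioo (0 : ℝ) 1,
    R f g → R g f → R (mix α f g) f

/-- `xf` assigns to every act a certainty equivalent. -/
def IsCE (𝓐 : Set (Set S)) (X : Set V) (R : (S → V) → (S → V) → Prop)
    (xf : (S → V) → V) : Prop :=
  ∀ f ∈ Acts 𝓐 X, xf f ∈ X ∧ R f (constAct (xf f)) ∧ R (constAct (xf f)) f

/-- `C*`: the maximal candidate set of penalty functions. -/
def CstarOf (𝓐 : Set (Set S)) (X : Set V) (u : V → ℝ) (xf : (S → V) → V) :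
    Set ((Set S → ℝ) → EReal) :=
  {c | c ∈ Cscr 𝓐 ∧ ∀ f ∈ Acts 𝓐 X, minVal 𝓐 c (uAct u f) ≤ (u (xf f) : EReal)}

/-- `B*`: the maximal candidate set of reward functions. -/
def BstarOf (𝓐 : Set (Set S)) (X : Set V) (u : V → ℝ) (xf : (S → V) → V) :
    Set ((Set S → ℝ) → EReal) :=
  {b | b ∈ Cscr 𝓐 ∧ ∀ f ∈ Acts 𝓐 X, (u (xf f) : EReal) ≤ maxVal 𝓐 b (uAct u f)}

/-- `Pfam*`: the maximal family of prior sets (maxmin form). -/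
def PstarOf (𝓐 : Set (Set S)) (X : Set V) (u : V → ℝ) (xf : (S → V) → V) :
    Set (Set (Set S → ℝ)) :=
  {P | P ⊆ Δset 𝓐 ∧ P.Nonempty ∧ Convex ℝ P ∧ (@IsCompact _ (weakStar 𝓐) P) ∧
    ∀ f ∈ Acts 𝓐 X, minPVal P (uAct u f) ≤ (u (xf f) : EReal)}

/-- `Qfam*`: the maximal family of prior sets (minmax form). -/
def QstarOf (𝓐 : Set (Set S)) (X : Set V) (u : V → ℝ) (xf : (S → V) → V) :
    Set (Set (Set S → ℝ)) :=
  {Q | Q ⊆ Δset 𝓐 ∧ Q.Nonempty ∧ Convex ℝ Q ∧ (@IsCompact _ (weakStar 𝓐) Q) ∧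
    ∀ f ∈ Acts 𝓐 X, (u (xf f) : EReal) ≤ maxQVal Q (uAct u f)}

/-- `C` yields the maxmin representation of `R` with utility `u`. -/
def MaxminRep (𝓐 : Set (Set S)) (X : Set V) (R : (S → V) → (S → V) → Prop)
    (u : V → ℝ) (C : Set ((Set S → ℝ) → EReal)) : Prop :=
  ∀ f ∈ Acts 𝓐 X, ∀ g ∈ Acts 𝓐 X,
    (R f g ↔ maxminVal 𝓐 C (uAct u g) ≤ maxminVal 𝓐 C (uAct u f))

/-- All indicated maxima over `C` and minima over `Δ` are attained. -/
def MaxminAttained (𝓐 : Set (Set S)) (X : Set V) (u : V → ℝ)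
    (C : Set ((Set S → ℝ) → EReal)) : Prop :=
  ∀ f ∈ Acts 𝓐 X,
    (∀ c ∈ C, ∃ p ∈ Δset 𝓐,
      minVal 𝓐 c (uAct u f) = (fint p (uAct u f) : EReal) + c p) ∧
    ∃ c ∈ C, maxminVal 𝓐 C (uAct u f) = minVal 𝓐 c (uAct u f)

/-- `B` yields the minmax representation of `R` with utility `u`. -/
def MinmaxRep (𝓐 : Set (Set S)) (X : Set V) (R : (S → V) → (S → V) → Prop)
    (u : V → ℝ) (B : Set ((Set S → ℝ) → EReal)) : Prop :=
  ∀ f ∈ Acts 𝓐 X, ∀ g ∈ Acts 𝓐 X,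
    (R f g ↔ minmaxVal 𝓐 B (uAct u g) ≤ minmaxVal 𝓐 B (uAct u f))

/-- All indicated minima over `B` and maxima over `Δ` are attained. -/
def MinmaxAttained (𝓐 : Set (Set S)) (X : Set V) (u : V → ℝ)
    (B : Set ((Set S → ℝ) → EReal)) : Prop :=
  ∀ f ∈ Acts 𝓐 X,
    (∀ b ∈ B, ∃ q ∈ Δset 𝓐,
      maxVal 𝓐 b (uAct u f) = (fint q (uAct u f) : EReal) - b q) ∧
    ∃ b ∈ B, minmaxVal 𝓐 B (uAct u f) = maxVal 𝓐 b (uAct u f)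

/-- A family of nonempty, convex, weak*-compact subsets of `Δ`. -/
def IsPriorFamily (𝓐 : Set (Set S)) (Pfam : Set (Set (Set S → ℝ))) : Prop :=
  Pfam.Nonempty ∧ ∀ P ∈ Pfam,
    P ⊆ Δset 𝓐 ∧ P.Nonempty ∧ Convex ℝ P ∧ (@IsCompact _ (weakStar 𝓐) P)

/-- `Pfam` yields the maxmin representation of `R` with utility `u`. -/
def PRep (𝓐 : Set (Set S)) (X : Set V) (R : (S → V) → (S → V) → Prop)
    (u : V → ℝ) (Pfam : Set (Set (Set S → ℝ))) : Prop :=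
  ∀ f ∈ Acts 𝓐 X, ∀ g ∈ Acts 𝓐 X,
    (R f g ↔ maxminPVal Pfam (uAct u g) ≤ maxminPVal Pfam (uAct u f))

/-- All indicated maxima over `Pfam` and minima over `P` are attained. -/
def PAttained (𝓐 : Set (Set S)) (X : Set V) (u : V → ℝ)
    (Pfam : Set (Set (Set S → ℝ))) : Prop :=
  ∀ f ∈ Acts 𝓐 X,
    (∀ P ∈ Pfam, ∃ p ∈ P, minPVal P (uAct u f) = (fint p (uAct u f) : EReal)) ∧
    ∃ P ∈ Pfam, maxminPVal Pfam (uAct u f) = minPVal P (uAct u f)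

/-- `Qfam` yields the minmax representation of `R` with utility `u`. -/
def QRep (𝓐 : Set (Set S)) (X : Set V) (R : (S → V) → (S → V) → Prop)
    (u : V → ℝ) (Qfam : Set (Set (Set S → ℝ))) : Prop :=
  ∀ f ∈ Acts 𝓐 X, ∀ g ∈ Acts 𝓐 X,
    (R f g ↔ minmaxQVal Qfam (uAct u g) ≤ minmaxQVal Qfam (uAct u f))

/-- All indicated minima over `Qfam` and maxima over `Q` are attained. -/
def QAttained (𝓐 : Set (Set S)) (X : Set V) (u : V → ℝ)
    (Qfam : Set (Set (Set S → ℝ))) : Prop :=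
  ∀ f ∈ Acts 𝓐 X,
    (∀ Q ∈ Qfam, ∃ q ∈ Q, maxQVal Q (uAct u f) = (fint q (uAct u f) : EReal)) ∧
    ∃ Q ∈ Qfam, minmaxQVal Qfam (uAct u f) = maxQVal Q (uAct u f)

/-- `c₁ ≈_u c₂`: `c₁` and `c₂` induce the same variational functional on `B₀(Σ, u(X))`. -/
def ApproxEq (𝓐 : Set (Set S)) (X : Set V) (u : V → ℝ)
    (c₁ c₂ : (Set S → ℝ) → EReal) : Prop :=
  ∀ φ : S → ℝ, IsSimpleFn 𝓐 φ → (∀ s, φ s ∈ u '' X) →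
    minVal 𝓐 c₁ φ = minVal 𝓐 c₂ φ

/-- `R₁` is more ambiguity averse than `R₂`. -/
def MoreAmbiguityAverse (𝓐 : Set (Set S)) (X : Set V)
    (R₁ R₂ : (S → V) → (S → V) → Prop) : Prop :=
  ∀ f ∈ Acts 𝓐 X, ∀ x ∈ X, R₂ (constAct x) f → R₁ (constAct x) f

/-- `u₁` and `u₂` are positive affine transformations of each other on `X`. -/
def CardEquiv (X : Set V) (u₁ u₂ : V → ℝ) : Prop :=
  ∃ a b : ℝ, 0 < a ∧ ∀ x ∈ X, u₂ x = a * u₁ x + b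

/-- A capacity on `(S, Σ)`. -/
def IsCapacity (𝓐 : Set (Set S)) (π : Set S → ℝ) : Prop :=
  π ∅ = 0 ∧ π Set.univ = 1 ∧ ∀ A ∈ 𝓐, ∀ B ∈ 𝓐, A ⊆ B → π A ≤ π B

/-- The Choquet integral of a (simple) function against a capacity. -/
noncomputable def choquet (π : Set S → ℝ) (φ : S → ℝ) : ℝ :=
  (∫ t in Set.Ioi (0 : ℝ), π {s | t ≤ φ s}) +
    ∫ t in Set.Iio (0 : ℝ), (π {s | t ≤ φ s} - 1)

section Alg
variable {𝓐 : Set (Set S)} (hA : IsSetAlg 𝓐)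

lemma IsSetAlg.univ_mem (hA : IsSetAlg 𝓐) : Set.univ ∈ 𝓐 := by
  have := hA.compl_mem ∅ hA.empty_mem; simpa using this

lemma IsSetAlg.inter_mem (hA : IsSetAlg 𝓐) {A B : Set S} (h1 : A ∈ 𝓐) (h2 : B ∈ 𝓐) : A ∩ B ∈ 𝓐 := by
  have : A ∩ B = (Aᶜ ∪ Bᶜ)ᶜ := by simp [Set.compl_union]
  rw [this]
  exact hA.compl_mem _ (hA.union_mem _ (hA.compl_mem _ h1) _ (hA.compl_mem _ h2))

lemma IsSetAlg.biUnion_mem (hA : IsSetAlg 𝓐) {ι : Type*} (I : Finset ι) {A : ι → Set S}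
    (h : ∀ i ∈ I, A i ∈ 𝓐) : (⋃ i ∈ I, A i) ∈ 𝓐 := by
  classical
  induction I using Finset.induction_on with
  | empty => simpa using hA.empty_mem
  | insert a I' hnot ih =>
    rw [Finset.set_biUnion_insert]
    exact hA.union_mem _ (h a (Finset.mem_insert_self a I'))
      _ (ih fun i hi => h i (Finset.mem_insert_of_mem hi))

end Alg

section Delta
variable {𝓐 : Set (Set S)} {p : Set S → ℝ}

lemma dempty (hp : p ∈ Δset 𝓐) (hA : IsSetAlg 𝓐) : p ∅ = 0 := by
  have := hp.2.2.1 ∅ hA.empty_mem ∅ hA.empty_mem (by simp)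
  simp at this; linarith

lemma fa_sum (hA : IsSetAlg 𝓐) (hp : p ∈ Δset 𝓐) {ι : Type*} (I : Finset ι) {A : ι → Set S}
    (hmem : ∀ i ∈ I, A i ∈ 𝓐)
    (hdisj : ∀ i ∈ I, ∀ j ∈ I, i ≠ j → Disjoint (A i) (A j)) :
    p (⋃ i ∈ I, A i) = ∑ i ∈ I, p (A i) := by
  classical
  induction I using Finset.induction_on with
  | empty => simpa using dempty hp hA
  | insert a I' hnot ih =>
    rw [Finset.set_biUnion_insert, Finset.sum_insert hnot]
    have hU : (⋃ i ∈ I', A i) ∈ 𝓐 :=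
      hA.biUnion_mem I' fun i hi => hmem i (Finset.mem_insert_of_mem hi)
    have hd : Disjoint (A a) (⋃ i ∈ I', A i) := by
      rw [Set.disjoint_iUnion₂_right]
      intro i hi
      exact hdisj a (Finset.mem_insert_self a I') i (Finset.mem_insert_of_mem hi)
        (fun h => hnot (h ▸ hi))
    rw [hp.2.2.1 _ (hmem a (Finset.mem_insert_self a I')) _ hU hd,
      ih (fun i hi => hmem i (Finset.mem_insert_of_mem hi))
        (fun i hi j hj hij => hdisj i (Finset.mem_insert_of_mem hi) j
          (Finset.mem_insert_of_mem hj) hij)]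

lemma sum_partition (hA : IsSetAlg 𝓐) (hp : p ∈ Δset 𝓐) {φ : S → ℝ}
    (hφ : IsSimpleFn 𝓐 φ) {B : Set S} (hB : B ∈ 𝓐) :
    p B = ∑ t ∈ hφ.1.toFinset, p (B ∩ φ ⁻¹' {t}) := by
  have hBeq : B = ⋃ t ∈ hφ.1.toFinset, (B ∩ φ ⁻¹' {t}) := by
    ext s
    simp only [Set.mem_iUnion, Set.mem_inter_iff, Set.mem_preimage, Set.mem_singleton_iff,
      Set.Finite.mem_toFinset]
    constructor
    · intro hs; exact ⟨φ s, Set.mem_range_self s, hs, rfl⟩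
    · rintro ⟨t, -, hs, -⟩; exact hs
  calc p B = p (⋃ t ∈ hφ.1.toFinset, (B ∩ φ ⁻¹' {t})) := by rw [← hBeq]
    _ = ∑ t ∈ hφ.1.toFinset, p (B ∩ φ ⁻¹' {t}) := by
        apply fa_sum hA hp
        · intro t _; exact hA.inter_mem hB (hφ.2 t)
        · intro t _ u _ htu
          apply Set.disjoint_left.2
          rintro s ⟨-, hs1⟩ ⟨-, hs2⟩
          simp only [Set.mem_preimage, Set.mem_singleton_iff] at hs1 hs2
          exact htu (hs1 ▸ hs2 ▸ rfl)

lemma sum_partition_univ (hA : IsSetAlg 𝓐) (hp : p ∈ Δset 𝓐) {φ : S → ℝ}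
    (hφ : IsSimpleFn 𝓐 φ) :
    ∑ t ∈ hφ.1.toFinset, p (φ ⁻¹' {t}) = 1 := by
  have := sum_partition hA hp hφ hA.univ_mem
  simp only [Set.univ_inter] at this
  rw [← this, hp.1]

end Delta


section Fint
variable {𝓐 : Set (Set S)} {p : Set S → ℝ}

lemma fint_eq {φ : S → ℝ} (h : (Set.range φ).Finite) (p : Set S → ℝ) :
    fint p φ = ∑ t ∈ h.toFinset, t * p (φ ⁻¹' {t}) := by
  rw [fint, dif_pos h]

lemma fint_le (hA : IsSetAlg 𝓐) (hp : p ∈ Δset 𝓐) {φ ψ : S → ℝ}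
    (hφ : IsSimpleFn 𝓐 φ) (hψ : IsSimpleFn 𝓐 ψ) (M : ℝ)
    (h : ∀ s, φ s ≤ ψ s + M) : fint p φ ≤ fint p ψ + M := by
  classical
  have key1 : fint p φ = ∑ t ∈ hφ.1.toFinset, ∑ u ∈ hψ.1.toFinset,
      t * p (φ ⁻¹' {t} ∩ ψ ⁻¹' {u}) := by
    rw [fint_eq hφ.1]
    refine Finset.sum_congr rfl fun t _ => ?_
    rw [sum_partition hA hp hψ (hφ.2 t), Finset.mul_sum]
  have key2 : fint p ψ = ∑ t ∈ hφ.1.toFinset, ∑ u ∈ hψ.1.toFinset,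
      u * p (φ ⁻¹' {t} ∩ ψ ⁻¹' {u}) := by
    rw [fint_eq hψ.1, Finset.sum_comm]
    refine Finset.sum_congr rfl fun u _ => ?_
    rw [sum_partition hA hp hφ (hψ.2 u), Finset.mul_sum]
    refine Finset.sum_congr rfl fun t _ => ?_
    rw [Set.inter_comm]
  have key3 : (M : ℝ) = ∑ t ∈ hφ.1.toFinset, ∑ u ∈ hψ.1.toFinset,
      M * p (φ ⁻¹' {t} ∩ ψ ⁻¹' {u}) := by
    have : ∀ t, p (φ ⁻¹' {t}) = ∑ u ∈ hψ.1.toFinset, p (φ ⁻¹' {t} ∩ ψ ⁻¹' {u}) :=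
      fun t => sum_partition hA hp hψ (hφ.2 t)
    calc M = M * ∑ t ∈ hφ.1.toFinset, p (φ ⁻¹' {t}) := by
            rw [sum_partition_univ hA hp hφ, mul_one]
      _ = _ := by
            rw [Finset.mul_sum]
            refine Finset.sum_congr rfl fun t _ => ?_
            rw [this t, Finset.mul_sum]
  rw [key1]
  calc ∑ t ∈ hφ.1.toFinset, ∑ u ∈ hψ.1.toFinset, t * p (φ ⁻¹' {t} ∩ ψ ⁻¹' {u})
      ≤ ∑ t ∈ hφ.1.toFinset, ∑ u ∈ hψ.1.toFinset, (u + M) * p (φ ⁻¹' {t} ∩ ψ ⁻¹' {u}) := by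
        refine Finset.sum_le_sum fun t _ => Finset.sum_le_sum fun u _ => ?_
        rcases Set.eq_empty_or_nonempty (φ ⁻¹' {t} ∩ ψ ⁻¹' {u}) with he | ⟨s, hs1, hs2⟩
        · rw [he, dempty hp hA, mul_zero, mul_zero]
        · simp only [Set.mem_preimage, Set.mem_singleton_iff] at hs1 hs2
          have hp0 : 0 ≤ p (φ ⁻¹' {t} ∩ ψ ⁻¹' {u}) :=
            hp.2.1 _ (hA.inter_mem (hφ.2 t) (hψ.2 u))
          have : t ≤ u + M := by rw [← hs1, ← hs2]; exact h s
          exact mul_le_mul_of_nonneg_right this hp0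
    _ = fint p ψ + M := by
        have expand : ∑ t ∈ hφ.1.toFinset, ∑ u ∈ hψ.1.toFinset,
            (u + M) * p (φ ⁻¹' {t} ∩ ψ ⁻¹' {u})
            = (∑ t ∈ hφ.1.toFinset, ∑ u ∈ hψ.1.toFinset, u * p (φ ⁻¹' {t} ∩ ψ ⁻¹' {u}))
              + ∑ t ∈ hφ.1.toFinset, ∑ u ∈ hψ.1.toFinset, M * p (φ ⁻¹' {t} ∩ ψ ⁻¹' {u}) := by
          rw [← Finset.sum_add_distrib]
          refine Finset.sum_congr rfl fun t _ => ?_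
          rw [← Finset.sum_add_distrib]
          refine Finset.sum_congr rfl fun u _ => ?_
          ring
        rw [expand, ← key2, ← key3]

lemma fint_affine (a b : ℝ) (p q : Set S → ℝ) (φ : S → ℝ) :
    fint (a • p + b • q) φ = a * fint p φ + b * fint q φ := by
  by_cases h : (Set.range φ).Finite
  · rw [fint_eq h, fint_eq h, fint_eq h, Finset.mul_sum, Finset.mul_sum,
      ← Finset.sum_add_distrib]
    refine Finset.sum_congr rfl fun t _ => ?_
    simp only [Pi.add_apply, Pi.smul_apply, smul_eq_mul]
    ring
  · simp [fint, dif_neg h]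

lemma fint_const [Nonempty S] (k : ℝ) (hp1 : p Set.univ = 1) :
    fint p (fun _ : S => k) = k := by
  have h : (Set.range (fun _ : S => k)).Finite := by
    rw [Set.range_const]; exact Set.finite_singleton k
  rw [fint_eq h]
  have : h.toFinset = {k} := by
    ext t; simp [Set.Finite.mem_toFinset, Set.range_const]
  rw [this, Finset.sum_singleton]
  have : (fun _ : S => k) ⁻¹' {k} = Set.univ := by
    ext s; simp
  rw [this, hp1, mul_one]

open Classical in
noncomputable def dirac (𝓐 : Set (Set S)) (s : S) : Set S → ℝ :=
  fun A => if A ∈ 𝓐 ∧ s ∈ A then 1 else 0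

lemma dirac_mem (hA : IsSetAlg 𝓐) (s : S) : dirac 𝓐 s ∈ Δset 𝓐 := by
  classical
  refine ⟨?_, ?_, ?_, ?_⟩
  · rw [dirac, if_pos ⟨hA.univ_mem, Set.mem_univ s⟩]
  · intro A _; rw [dirac]; split <;> norm_num
  · intro A hAm B hBm hd
    have hU : A ∪ B ∈ 𝓐 := hA.union_mem _ hAm _ hBm
    by_cases h1 : s ∈ A
    · have h2 : s ∉ B := fun h2 => Set.disjoint_left.1 hd h1 h2
      simp [dirac, hAm, hBm, hU, h1, h2]
    · by_cases h2 : s ∈ B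
      · simp [dirac, hAm, hBm, hU, h1, h2]
      · have : s ∉ A ∪ B := by simp [h1, h2]
        simp [dirac, hAm, hBm, hU, h1, h2, this]
  · intro A hAn; rw [dirac, if_neg (fun h => hAn h.1)]

lemma fint_dirac (hA : IsSetAlg 𝓐) {φ : S → ℝ} (hφ : IsSimpleFn 𝓐 φ) (s : S) :
    fint (dirac 𝓐 s) φ = φ s := by
  classical
  rw [fint_eq hφ.1]
  rw [Finset.sum_eq_single (φ s)]
  · rw [dirac, if_pos ⟨hφ.2 (φ s), by simp⟩, mul_one]
  · intro t _ ht
    have : s ∉ φ ⁻¹' {t} := by simp [Ne.symm ht]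
    rw [dirac, if_neg (fun h => this h.2), mul_zero]
  · intro h
    exact absurd (hφ.1.mem_toFinset.2 (Set.mem_range_self s)) h

end Fint

section ERealHelpers

lemma ereal_add_iSup {ι : Sort*} (k : ℝ) (a : ι → EReal) :
    (⨆ i, (k : EReal) + a i) = (k : EReal) + ⨆ i, a i := by
  apply le_antisymm
  · exact iSup_le fun i => add_le_add_right (le_iSup a i) _
  · have h1 : (⨆ i, a i) ≤ (⨆ i, (k : EReal) + a i) - (k : EReal) := by
      apply iSup_le; intro i
      have heq : a i = ((k : EReal) + a i) - (k : EReal) := by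
        rw [add_comm]; exact EReal.add_sub_cancel_right.symm
      rw [heq, sub_eq_add_neg, sub_eq_add_neg]
      exact add_le_add_left (le_iSup (fun i => (k : EReal) + a i) i) _
    calc (k : EReal) + ⨆ i, a i
        ≤ (k : EReal) + ((⨆ i, (k : EReal) + a i) - (k : EReal)) := add_le_add_right h1 _
      _ = ⨆ i, (k : EReal) + a i := by
          rw [add_comm]; exact EReal.sub_add_cancel

lemma ereal_add_iInf {ι : Sort*} (k : ℝ) (a : ι → EReal) :
    (⨅ i, (k : EReal) + a i) = (k : EReal) + ⨅ i, a i := by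
  apply le_antisymm
  · have h1 : (⨅ i, (k : EReal) + a i) - (k : EReal) ≤ ⨅ i, a i := by
      apply le_iInf; intro i
      have heq : a i = ((k : EReal) + a i) - (k : EReal) := by
        rw [add_comm]; exact EReal.add_sub_cancel_right.symm
      rw [heq, sub_eq_add_neg, sub_eq_add_neg]
      exact add_le_add_left (iInf_le (fun i => (k : EReal) + a i) i) _
    calc (⨅ i, (k : EReal) + a i)
        = ((⨅ i, (k : EReal) + a i) - (k : EReal)) + (k : EReal) :=
          EReal.sub_add_cancel.symm
      _ ≤ (⨅ i, a i) + (k : EReal) := add_le_add_left h1 _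
      _ = (k : EReal) + ⨅ i, a i := add_comm _ _
  · exact le_iInf fun i => add_le_add_right (iInf_le a i) _

lemma ereal_biSup_add {α : Type*} (Cs : Set α) (k : ℝ) (a : α → EReal) :
    (⨆ c ∈ Cs, ((k : EReal) + a c)) = (k : EReal) + ⨆ c ∈ Cs, a c := by
  rw [iSup_subtype', iSup_subtype', ereal_add_iSup]

lemma ereal_biInf_add {α : Type*} (Cs : Set α) (k : ℝ) (a : α → EReal) :
    (⨅ c ∈ Cs, ((k : EReal) + a c)) = (k : EReal) + ⨅ c ∈ Cs, a c := by
  rw [iInf_subtype', iInf_subtype', ereal_add_iInf]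

end ERealHelpers


section ActsHelpers
variable [AddCommGroup V] [Module ℝ V] {𝓐 : Set (Set S)} {X : Set V}

lemma constAct_mem (hA : IsSetAlg 𝓐) {x : V} (hx : x ∈ X) :
    constAct x ∈ Acts 𝓐 X (S := S) := by
  refine ⟨fun _ => hx, (Set.finite_singleton x).subset Set.range_const_subset, fun v => ?_⟩
  by_cases h : x = v
  · have : (constAct x : S → V) ⁻¹' {v} = Set.univ := by ext s; simp [constAct, h]
    rw [this]; exact hA.univ_mem
  · have : (constAct x : S → V) ⁻¹' {v} = ∅ := by ext s; simp [constAct, h]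
    rw [this]; exact hA.empty_mem

lemma uAct_simple (hA : IsSetAlg 𝓐) {u : V → ℝ} {f : S → V} (hf : f ∈ Acts 𝓐 X) :
    IsSimpleFn 𝓐 (uAct u f) := by
  classical
  constructor
  · have : Set.range (uAct u f) = u '' Set.range f := Set.range_comp u f
    rw [this]; exact hf.2.1.image u
  · intro t
    have hpre : (uAct u f) ⁻¹' {t}
        = ⋃ v ∈ hf.2.1.toFinset.filter (fun v => u v = t), f ⁻¹' {v} := by
      ext s
      simp only [Set.mem_preimage, Set.mem_singleton_iff, Set.mem_iUnion,
        Finset.mem_filter, Set.Finite.mem_toFinset, uAct]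
      constructor
      · intro h; exact ⟨f s, ⟨Set.mem_range_self s, h⟩, rfl⟩
      · rintro ⟨v, ⟨-, hv⟩, hsv⟩
        rw [hsv]; exact hv
    rw [hpre]
    exact hA.biUnion_mem _ fun v _ => hf.2.2 v

lemma exists_max_range [Nonempty S] {d : S → ℝ} (hd : (Set.range d).Finite) :
    ∃ s0 : S, ∀ s : S, d s ≤ d s0 := by
  obtain ⟨m, hm, hmax⟩ := hd.toFinset.exists_max_image id
    ⟨d (Classical.arbitrary S), hd.mem_toFinset.2 (Set.mem_range_self _)⟩
  obtain ⟨s0, hs0⟩ := hd.mem_toFinset.1 hm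
  exact ⟨s0, fun s => by
    have := hmax (d s) (hd.mem_toFinset.2 (Set.mem_range_self s))
    simpa [hs0] using this⟩

lemma exists_min_range [Nonempty S] {d : S → ℝ} (hd : (Set.range d).Finite) :
    ∃ s0 : S, ∀ s : S, d s0 ≤ d s := by
  have hneg : (Set.range (fun s => -d s)).Finite := by
    have : Set.range (fun s => -d s) = (fun x : ℝ => -x) '' Set.range d := by
      rw [← Set.range_comp]; rfl
    rw [this]; exact hd.image _
  obtain ⟨s0, hs0⟩ := exists_max_range hneg
  exact ⟨s0, fun s => by have := hs0 s; simpa using this⟩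

lemma range_sub_finite {φ ψ : S → ℝ} (hφ : (Set.range φ).Finite) (hψ : (Set.range ψ).Finite) :
    (Set.range (fun s => φ s - ψ s)).Finite := by
  apply (Set.Finite.image2 (fun x y : ℝ => x - y) hφ hψ).subset
  rintro _ ⟨s, rfl⟩
  exact Set.mem_image2_of_mem (Set.mem_range_self s) (Set.mem_range_self s)

end ActsHelpers

section Variational
variable [Nonempty S] [AddCommGroup V] [Module ℝ V]
variable {𝓐 : Set (Set S)} {X : Set V} {R : (S → V) → (S → V) → Prop}
variable {u : V → ℝ} {C : Set ((Set S → ℝ) → EReal)} {xf : (S → V) → V}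

lemma maxmin_const {C : Set ((Set S → ℝ) → EReal)} (hG : Grounded 𝓐 C) (k : ℝ) :
    maxminVal 𝓐 C (fun _ : S => k) = (k : EReal) := by
  have h1 : ∀ c : (Set S → ℝ) → EReal,
      minVal 𝓐 c (fun _ : S => k) = (k : EReal) + ⨅ p ∈ Δset 𝓐, c p := by
    intro c
    rw [minVal]
    have heq : (⨅ p ∈ Δset 𝓐, ((fint p (fun _ : S => k) : EReal) + c p))
        = ⨅ p ∈ Δset 𝓐, ((k : EReal) + c p) :=
      iInf_congr fun p => iInf_congr fun hp => by rw [fint_const k hp.1]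
    rw [heq, ereal_biInf_add]
  calc maxminVal 𝓐 C (fun _ : S => k)
      = ⨆ c ∈ C, ((k : EReal) + ⨅ p ∈ Δset 𝓐, c p) :=
        iSup_congr fun c => iSup_congr fun _ => h1 c
    _ = (k : EReal) + ⨆ c ∈ C, ⨅ p ∈ Δset 𝓐, c p := ereal_biSup_add C k _
    _ = (k : EReal) + 0 := by rw [hG]
    _ = (k : EReal) := add_zero _

lemma val_lemma (hA : IsSetAlg 𝓐) (hG : Grounded 𝓐 C) (hrep : MaxminRep 𝓐 X R u C)
    (hxf : IsCE 𝓐 X R xf) :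
    ∀ f ∈ Acts 𝓐 X, maxminVal 𝓐 C (uAct u f) = ((u (xf f) : ℝ) : EReal) := by
  intro f hf
  obtain ⟨hxX, hR1, hR2⟩ := hxf f hf
  have hca : constAct (xf f) ∈ Acts 𝓐 X (S := S) := constAct_mem hA hxX
  have hcv : maxminVal 𝓐 C (uAct u (constAct (xf f))) = ((u (xf f) : ℝ) : EReal) :=
    maxmin_const hG (u (xf f))
  have h1 := (hrep f hf (constAct (xf f)) hca).1 hR1
  have h2 := (hrep (constAct (xf f)) hca f hf).1 hR2
  rw [← hcv]
  exact le_antisymm h2 h1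

lemma riff_lemma (hA : IsSetAlg 𝓐) (hG : Grounded 𝓐 C) (hrep : MaxminRep 𝓐 X R u C)
    (hxf : IsCE 𝓐 X R xf) :
    ∀ f ∈ Acts 𝓐 X, ∀ x ∈ X, (R (constAct x) f ↔ u (xf f) ≤ u x) := by
  intro f hf x hx
  have hca : constAct x ∈ Acts 𝓐 X (S := S) := constAct_mem hA hx
  have hval := val_lemma hA hG hrep hxf f hf
  have hcv : maxminVal 𝓐 C (uAct u (constAct x)) = ((u x : ℝ) : EReal) :=
    maxmin_const hG (u x)
  rw [hrep (constAct x) hca f hf, hval, hcv]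
  exact EReal.coe_le_coe_iff

lemma lip_lemma (hA : IsSetAlg 𝓐) (hG : Grounded 𝓐 C) (hrep : MaxminRep 𝓐 X R u C)
    (hxf : IsCE 𝓐 X R xf) :
    ∀ f ∈ Acts 𝓐 X, ∀ g ∈ Acts 𝓐 X, ∀ M : ℝ,
      (∀ s, u (g s) ≤ u (f s) + M) → u (xf g) ≤ u (xf f) + M := by
  intro f hf g hg M hM
  have hvf := val_lemma hA hG hrep hxf f hf
  have hvg := val_lemma hA hG hrep hxf g hg
  have key : maxminVal 𝓐 C (uAct u g) ≤ (M : EReal) + maxminVal 𝓐 C (uAct u f) := by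
    rw [maxminVal, maxminVal, ← ereal_biSup_add]
    refine iSup_le fun c => iSup_le fun hc => ?_
    refine le_iSup_of_le c (le_iSup_of_le hc ?_)
    rw [minVal, minVal, ← ereal_biInf_add]
    refine le_iInf fun p => le_iInf fun hp => ?_
    refine iInf_le_of_le p (iInf_le_of_le hp ?_)
    have hle : fint p (uAct u g) ≤ fint p (uAct u f) + M :=
      fint_le hA hp (uAct_simple hA hg) (uAct_simple hA hf) M hM
    calc (fint p (uAct u g) : EReal) + c p
        ≤ ((fint p (uAct u f) + M : ℝ) : EReal) + c p :=
          add_le_add_left (EReal.coe_le_coe_iff.2 hle) _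
      _ = (M : EReal) + ((fint p (uAct u f) : EReal) + c p) := by
          rw [EReal.coe_add, add_comm (fint p (uAct u f) : EReal) (M : EReal), add_assoc]
  rw [hvf, hvg] at key
  have key2 : ((u (xf g) : ℝ) : EReal) ≤ ((M + u (xf f) : ℝ) : EReal) := by
    rw [EReal.coe_add]; exact key
  have := EReal.coe_le_coe_iff.1 key2
  linarith

end Variational

section CscrHelpers
variable {𝓐 : Set (Set S)}

lemma cscr_affine (hA : IsSetAlg 𝓐) (α β : ℝ) {φ : S → ℝ} (hφ : IsSimpleFn 𝓐 φ) :
    (fun p => ((α * fint p φ + β : ℝ) : EReal)) ∈ Cscr 𝓐 := by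
  refine ⟨fun p _ => EReal.bot_lt_coe _, ?_, ?_⟩
  · letI : TopologicalSpace (Set S → ℝ) := weakStar 𝓐
    have hc1 : Continuous
        (fun p : Set S → ℝ => (fun ψ : {ψ : S → ℝ // IsSimpleFn 𝓐 ψ} => fint p ψ.1)) :=
      continuous_induced_dom
    have hc2 : Continuous (fun p : Set S → ℝ => fint p φ) :=
      (continuous_apply (⟨φ, hφ⟩ : {ψ : S → ℝ // IsSimpleFn 𝓐 ψ})).comp hc1
    have hc3 : Continuous (fun p : Set S → ℝ => ((α * fint p φ + β : ℝ) : EReal)) :=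
      continuous_coe_real_ereal.comp ((continuous_const.mul hc2).add continuous_const)
    exact hc3.lowerSemicontinuous.lowerSemicontinuousOn _
  · intro p hp q hq a b ha hb hab
    have hfa : fint (a • p + b • q) φ = a * fint p φ + b * fint q φ := fint_affine a b p q φ
    have heq : α * fint (a • p + b • q) φ + β
        = a * (α * fint p φ + β) + b * (α * fint q φ + β) := by
      rw [hfa]; linear_combination (-β) * hab
    show ((α * fint (a • p + b • q) φ + β : ℝ) : EReal)
        ≤ (a : EReal) * ((α * fint p φ + β : ℝ) : EReal)
          + (b : EReal) * ((α * fint q φ + β : ℝ) : EReal)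
    rw [heq, EReal.coe_add, EReal.coe_mul, EReal.coe_mul]

end CscrHelpers

section AffLem
variable [AddCommGroup V] [Module ℝ V]

lemma afflem {X : Set V} (hXc : Convex ℝ X)
    {u₁ u₂ : V → ℝ} (hu₁ : IsNonconstAffine X u₁) (hu₂ : IsNonconstAffine X u₂)
    (hmono : ∀ x ∈ X, ∀ y ∈ X, u₂ y ≤ u₂ x → u₁ y ≤ u₁ x) :
    CardEquiv X u₁ u₂ := by
  obtain ⟨haff₁, x₁, hx₁, y₁, hy₁, hne₁⟩ := hu₁
  obtain ⟨x₀, hx₀, y₀, hy₀, hlt₁⟩ : ∃ x₀ ∈ X, ∃ y₀ ∈ X, u₁ y₀ < u₁ x₀ := by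
    rcases lt_or_gt_of_ne hne₁ with h | h
    · exact ⟨y₁, hy₁, x₁, hx₁, h⟩
    · exact ⟨x₁, hx₁, y₁, hy₁, h⟩
  have hlt₂ : u₂ y₀ < u₂ x₀ := by
    by_contra h
    push_neg at h
    exact absurd (hmono y₀ hy₀ x₀ hx₀ h) (not_le.2 hlt₁)
  have hE : ∀ x ∈ X, ∀ y ∈ X, u₂ x = u₂ y → u₁ x = u₁ y := fun x hx y hy h =>
    le_antisymm (hmono y hy x hx h.le) (hmono x hx y hy h.ge)
  have hd : (0:ℝ) < u₁ x₀ - u₁ y₀ := sub_pos.2 hlt₁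
  set a := (u₂ x₀ - u₂ y₀) / (u₁ x₀ - u₁ y₀) with ha
  have ha0 : 0 < a := div_pos (sub_pos.2 hlt₂) hd
  set b := u₂ y₀ - a * u₁ y₀ with hb
  have hamul : a * (u₁ x₀ - u₁ y₀) = u₂ x₀ - u₂ y₀ := div_mul_cancel₀ _ (ne_of_gt hd)
  have hax₀ : a * u₁ x₀ + b = u₂ x₀ := by rw [hb]; nlinarith [hamul]
  have hay₀ : a * u₁ y₀ + b = u₂ y₀ := by rw [hb]; ring
  refine ⟨a, b, ha0, fun x hx => ?_⟩
  have aff₂ := hu₂.1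
  rcases le_or_gt (u₂ x) (u₂ y₀) with hc3 | hgt
  · rcases eq_or_lt_of_le hc3 with heq | hc3
    · rw [heq, ← hay₀, hE x hx y₀ hy₀ heq]
    · -- Case: u₂ x < u₂ y₀
      set t := (u₂ y₀ - u₂ x) / (u₂ x₀ - u₂ x) with ht
      have hden : (0:ℝ) < u₂ x₀ - u₂ x := by linarith
      have ht0 : 0 < t := div_pos (by linarith) hden
      have ht1 : t < 1 := (div_lt_one hden).2 (by linarith)
      have htmul : t * (u₂ x₀ - u₂ x) = u₂ y₀ - u₂ x := div_mul_cancel₀ _ (ne_of_gt hden)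
      have hz : t • x₀ + (1 - t) • x ∈ X := hXc hx₀ hx (le_of_lt ht0) (by linarith) (by ring)
      have hu2z : u₂ (t • x₀ + (1 - t) • x) = t * u₂ x₀ + (1 - t) * u₂ x :=
        aff₂ x₀ hx₀ x hx t ⟨le_of_lt ht0, le_of_lt ht1⟩
      have hu2z' : t * u₂ x₀ + (1 - t) * u₂ x = u₂ y₀ := by nlinarith [htmul]
      have hu1z : t * u₁ x₀ + (1 - t) * u₁ x = u₁ y₀ := by
        have h1 := haff₁ x₀ hx₀ x hx t ⟨le_of_lt ht0, le_of_lt ht1⟩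
        have h2 := hE (t • x₀ + (1 - t) • x) hz y₀ hy₀ (by rw [hu2z]; exact hu2z')
        rw [← h1, h2]
      have hkey : (1 - t) * (a * u₁ x + b) = (1 - t) * u₂ x := by
        linear_combination a * hu1z - hu2z' - t * hax₀ + hay₀
      have h1t : (0:ℝ) < 1 - t := by linarith
      have := mul_left_cancel₀ (ne_of_gt h1t) hkey
      linarith
  · rcases le_or_gt (u₂ x) (u₂ x₀) with hc1 | hc2
    · -- Case: u₂ y₀ < u₂ x ≤ u₂ x₀
      set t := (u₂ x - u₂ y₀) / (u₂ x₀ - u₂ y₀) with ht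
      have hden : (0:ℝ) < u₂ x₀ - u₂ y₀ := by linarith
      have ht0 : 0 < t := div_pos (by linarith) hden
      have ht1 : t ≤ 1 := (div_le_one hden).2 (by linarith)
      have htmul : t * (u₂ x₀ - u₂ y₀) = u₂ x - u₂ y₀ := div_mul_cancel₀ _ (ne_of_gt hden)
      have hz : t • x₀ + (1 - t) • y₀ ∈ X := hXc hx₀ hy₀ (le_of_lt ht0) (by linarith) (by ring)
      have hu2z : u₂ (t • x₀ + (1 - t) • y₀) = t * u₂ x₀ + (1 - t) * u₂ y₀ :=
        aff₂ x₀ hx₀ y₀ hy₀ t ⟨le_of_lt ht0, ht1⟩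
      have hu2z' : t * u₂ x₀ + (1 - t) * u₂ y₀ = u₂ x := by nlinarith [htmul]
      have hu1x : u₁ x = t * u₁ x₀ + (1 - t) * u₁ y₀ := by
        have h1 := haff₁ x₀ hx₀ y₀ hy₀ t ⟨le_of_lt ht0, ht1⟩
        have h2 := hE x hx (t • x₀ + (1 - t) • y₀) hz (by rw [hu2z]; exact hu2z'.symm)
        rw [h2, h1]
      rw [hu1x]
      linear_combination - hu2z' - t * hax₀ - (1 - t) * hay₀
    · -- Case: u₂ x₀ < u₂ x
      set t := (u₂ x₀ - u₂ y₀) / (u₂ x - u₂ y₀) with ht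
      have hden : (0:ℝ) < u₂ x - u₂ y₀ := by linarith
      have ht0 : 0 < t := div_pos (by linarith) hden
      have ht1 : t < 1 := (div_lt_one hden).2 (by linarith)
      have htmul : t * (u₂ x - u₂ y₀) = u₂ x₀ - u₂ y₀ := div_mul_cancel₀ _ (ne_of_gt hden)
      have hz : t • x + (1 - t) • y₀ ∈ X := hXc hx hy₀ (le_of_lt ht0) (by linarith) (by ring)
      have hu2z : u₂ (t • x + (1 - t) • y₀) = t * u₂ x + (1 - t) * u₂ y₀ :=
        aff₂ x hx y₀ hy₀ t ⟨le_of_lt ht0, le_of_lt ht1⟩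
      have hu2z' : t * u₂ x + (1 - t) * u₂ y₀ = u₂ x₀ := by nlinarith [htmul]
      have hu1z : t * u₁ x + (1 - t) * u₁ y₀ = u₁ x₀ := by
        have h1 := haff₁ x hx y₀ hy₀ t ⟨le_of_lt ht0, le_of_lt ht1⟩
        have h2 := hE (t • x + (1 - t) • y₀) hz x₀ hx₀ (by rw [hu2z]; exact hu2z')
        rw [← h1, h2]
      have hkey : t * (a * u₁ x + b) = t * u₂ x := by
        linear_combination a * hu1z - hu2z' + hax₀ - (1 - t) * hay₀
      have := mul_left_cancel₀ (ne_of_gt ht0) hkey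
      linarith

end AffLem

theorem stmt17 {S V : Type*} [Nonempty S] [AddCommGroup V] [Module ℝ V]
    (𝓐 : Set (Set S)) (hA : IsSetAlg 𝓐)
    (X : Set V) (hX : X.Nonempty) (hXc : Convex ℝ X)
    (R₁ R₂ : (S → V) → (S → V) → Prop)
    (h₁ : NiveloidalPref 𝓐 X R₁) (h₂ : NiveloidalPref 𝓐 X R₂)
    (u₁ u₂ : V → ℝ) (hu₁ : IsNonconstAffine X u₁) (hu₂ : IsNonconstAffine X u₂)
    (h0₁ : (0 : ℝ) ∈ interior (u₁ '' X)) (h0₂ : (0 : ℝ) ∈ interior (u₂ '' X))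
    (hrep₁ : ∃ C ⊆ Cscr 𝓐, Grounded 𝓐 C ∧ MaxminAttained 𝓐 X u₁ C ∧
      MaxminRep 𝓐 X R₁ u₁ C)
    (hrep₂ : ∃ C ⊆ Cscr 𝓐, Grounded 𝓐 C ∧ MaxminAttained 𝓐 X u₂ C ∧
      MaxminRep 𝓐 X R₂ u₂ C)
    (hconst₁ : ∀ x ∈ X, ∀ y ∈ X, (R₁ (constAct x) (constAct y) ↔ u₁ y ≤ u₁ x))
    (hconst₂ : ∀ x ∈ X, ∀ y ∈ X, (R₂ (constAct x) (constAct y) ↔ u₂ y ≤ u₂ x))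
    (xf₁ xf₂ : (S → V) → V) (hxf₁ : IsCE 𝓐 X R₁ xf₁) (hxf₂ : IsCE 𝓐 X R₂ xf₂) :
    (MoreAmbiguityAverse 𝓐 X R₁ R₂ ↔
      (CardEquiv X u₁ u₂ ∧ CstarOf 𝓐 X u₁ xf₁ ⊆ CstarOf 𝓐 X u₁ xf₂)) ∧
    (MoreAmbiguityAverse 𝓐 X R₁ R₂ ↔
      (CardEquiv X u₁ u₂ ∧ BstarOf 𝓐 X u₁ xf₂ ⊆ BstarOf 𝓐 X u₁ xf₁)) := by
  obtain ⟨C₁, hC₁sub, hG₁, hAtt₁, hRep₁⟩ := hrep₁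
  obtain ⟨C₂, hC₂sub, hG₂, hAtt₂, hRep₂⟩ := hrep₂
  have riff₁ := riff_lemma hA hG₁ hRep₁ hxf₁
  have riff₂ := riff_lemma hA hG₂ hRep₂ hxf₂
  have lip₁ := lip_lemma hA hG₁ hRep₁ hxf₁
  have lip₂ := lip_lemma hA hG₂ hRep₂ hxf₂
  -- (P1) more ambiguity averse implies cardinal equivalence
  have P1 : MoreAmbiguityAverse 𝓐 X R₁ R₂ → CardEquiv X u₁ u₂ := by
    intro hMAA
    refine afflem hXc hu₁ hu₂ ?_
    intro x hx y hy h2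
    have hR2 : R₂ (constAct x) (constAct y) := (hconst₂ x hx y hy).2 h2
    have hR1 : R₁ (constAct x) (constAct y) :=
      hMAA (constAct y) (constAct_mem hA hy) x hx hR2
    exact (hconst₁ x hx y hy).1 hR1
  -- (P2) more ambiguity averse implies the CE inequality
  have P2 : MoreAmbiguityAverse 𝓐 X R₁ R₂ →
      ∀ f ∈ Acts 𝓐 X, u₁ (xf₁ f) ≤ u₁ (xf₂ f) := by
    intro hMAA f hf
    have hx2 : xf₂ f ∈ X := (hxf₂ f hf).1
    have hR2 : R₂ (constAct (xf₂ f)) f := (hxf₂ f hf).2.2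
    have hR1 : R₁ (constAct (xf₂ f)) f := hMAA f hf _ hx2 hR2
    exact (riff₁ f hf _ hx2).1 hR1
  -- (P5) cardinal equivalence and the CE inequality imply more ambiguity averse
  have P5 : CardEquiv X u₁ u₂ → (∀ f ∈ Acts 𝓐 X, u₁ (xf₁ f) ≤ u₁ (xf₂ f)) →
      MoreAmbiguityAverse 𝓐 X R₁ R₂ := by
    rintro ⟨a, b, ha, hab⟩ hineq f hf x hx hR2
    have h2 : u₂ (xf₂ f) ≤ u₂ x := (riff₂ f hf x hx).1 hR2
    have hx2 : xf₂ f ∈ X := (hxf₂ f hf).1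
    rw [hab x hx, hab _ hx2] at h2
    have h2' : u₁ (xf₂ f) ≤ u₁ x := le_of_mul_le_mul_left (by linarith) ha
    exact (riff₁ f hf x hx).2 (le_trans (hineq f hf) h2')
  -- (P6) C₁* ⊆ C₂* implies the CE inequality
  have P6 : CstarOf 𝓐 X u₁ xf₁ ⊆ CstarOf 𝓐 X u₁ xf₂ →
      ∀ f ∈ Acts 𝓐 X, u₁ (xf₁ f) ≤ u₁ (xf₂ f) := by
    intro hsub f hf
    have hφf : IsSimpleFn 𝓐 (uAct u₁ f) := uAct_simple hA hf
    set k₁ := u₁ (xf₁ f) with hk₁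
    set cf : (Set S → ℝ) → EReal :=
      fun p => (((-1 : ℝ) * fint p (uAct u₁ f) + k₁ : ℝ) : EReal) with hcf
    have hmem : cf ∈ CstarOf 𝓐 X u₁ xf₁ := by
      refine ⟨cscr_affine hA (-1) k₁ hφf, ?_⟩
      intro g hg
      have hφg : IsSimpleFn 𝓐 (uAct u₁ g) := uAct_simple hA hg
      obtain ⟨s0, hs0⟩ := exists_min_range (range_sub_finite hφg.1 hφf.1)
      have hM : ∀ s, u₁ (f s) ≤ u₁ (g s) + (u₁ (f s0) - u₁ (g s0)) := by
        intro s
        have h1 := hs0 s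
        simp only [uAct] at h1
        linarith
      have hlip := lip₁ g hg f hf _ hM
      rw [minVal]
      refine iInf_le_of_le (dirac 𝓐 s0) (iInf_le_of_le (dirac_mem hA s0) ?_)
      show ((fint (dirac 𝓐 s0) (uAct u₁ g) : ℝ) : EReal)
          + (((-1 : ℝ) * fint (dirac 𝓐 s0) (uAct u₁ f) + k₁ : ℝ) : EReal)
          ≤ ((u₁ (xf₁ g) : ℝ) : EReal)
      rw [← EReal.coe_add]
      apply EReal.coe_le_coe_iff.2
      rw [fint_dirac hA hφg s0, fint_dirac hA hφf s0]
      simp only [uAct]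
      linarith
    have hle := (hsub hmem).2 f hf
    have hpt : ∀ p ∈ Δset 𝓐, ((fint p (uAct u₁ f) : EReal) + cf p) = (k₁ : EReal) := by
      intro p hp
      show ((fint p (uAct u₁ f) : ℝ) : EReal)
          + (((-1 : ℝ) * fint p (uAct u₁ f) + k₁ : ℝ) : EReal) = (k₁ : EReal)
      rw [← EReal.coe_add]
      exact EReal.coe_eq_coe_iff.2 (by ring)
    have hd0 : dirac 𝓐 (Classical.arbitrary S) ∈ Δset 𝓐 := dirac_mem hA _
    have hval : minVal 𝓐 cf (uAct u₁ f) = (k₁ : EReal) := by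
      rw [minVal]
      apply le_antisymm
      · exact iInf_le_of_le _ (iInf_le_of_le hd0 (le_of_eq (hpt _ hd0)))
      · exact le_iInf fun p => le_iInf fun hp => ge_of_eq (hpt p hp)
    rw [hval] at hle
    exact EReal.coe_le_coe_iff.1 hle
  -- (P7) CardEquiv and B₂* ⊆ B₁* imply the CE inequality
  have P7 : CardEquiv X u₁ u₂ → BstarOf 𝓐 X u₁ xf₂ ⊆ BstarOf 𝓐 X u₁ xf₁ →
      ∀ f ∈ Acts 𝓐 X, u₁ (xf₁ f) ≤ u₁ (xf₂ f) := by
    rintro ⟨a, b, ha, hab⟩ hsub f hf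
    have hφf : IsSimpleFn 𝓐 (uAct u₁ f) := uAct_simple hA hf
    set k₂ := u₁ (xf₂ f) with hk₂
    set bf : (Set S → ℝ) → EReal :=
      fun q => (((1 : ℝ) * fint q (uAct u₁ f) + (-k₂) : ℝ) : EReal) with hbf
    have hmem : bf ∈ BstarOf 𝓐 X u₁ xf₂ := by
      refine ⟨cscr_affine hA 1 (-k₂) hφf, ?_⟩
      intro g hg
      have hφg : IsSimpleFn 𝓐 (uAct u₁ g) := uAct_simple hA hg
      obtain ⟨s0, hs0⟩ := exists_max_range (range_sub_finite hφg.1 hφf.1)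
      have hM2 : ∀ s, u₂ (g s) ≤ u₂ (f s) + a * (u₁ (g s0) - u₁ (f s0)) := by
        intro s
        have h1 := hs0 s
        simp only [uAct] at h1
        rw [hab _ (hg.1 s), hab _ (hf.1 s)]
        have h2 := mul_le_mul_of_nonneg_left h1 (le_of_lt ha)
        linarith
      have hlip := lip₂ f hf g hg _ hM2
      rw [hab _ (hxf₂ g hg).1, hab _ (hxf₂ f hf).1] at hlip
      have hineq1 : u₁ (xf₂ g) ≤ u₁ (xf₂ f) + (u₁ (g s0) - u₁ (f s0)) :=
        le_of_mul_le_mul_left (by linarith) ha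
      rw [maxVal]
      refine le_iSup_of_le (dirac 𝓐 s0) (le_iSup_of_le (dirac_mem hA s0) ?_)
      show ((u₁ (xf₂ g) : ℝ) : EReal)
          ≤ ((fint (dirac 𝓐 s0) (uAct u₁ g) : ℝ) : EReal)
            - (((1 : ℝ) * fint (dirac 𝓐 s0) (uAct u₁ f) + (-k₂) : ℝ) : EReal)
      rw [← EReal.coe_sub]
      apply EReal.coe_le_coe_iff.2
      rw [fint_dirac hA hφg s0, fint_dirac hA hφf s0]
      simp only [uAct]
      linarith
    have hge := (hsub hmem).2 f hf
    have hpt : ∀ q ∈ Δset 𝓐, ((fint q (uAct u₁ f) : EReal) - bf q) = (k₂ : EReal) := by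
      intro q hq
      show ((fint q (uAct u₁ f) : ℝ) : EReal)
          - (((1 : ℝ) * fint q (uAct u₁ f) + (-k₂) : ℝ) : EReal) = (k₂ : EReal)
      rw [← EReal.coe_sub]
      exact EReal.coe_eq_coe_iff.2 (by ring)
    have hd0 : dirac 𝓐 (Classical.arbitrary S) ∈ Δset 𝓐 := dirac_mem hA _
    have hval : maxVal 𝓐 bf (uAct u₁ f) = (k₂ : EReal) := by
      rw [maxVal]
      apply le_antisymm
      · exact iSup_le fun q => iSup_le fun hq => le_of_eq (hpt q hq)
      · exact le_iSup_of_le _ (le_iSup_of_le hd0 (ge_of_eq (hpt _ hd0)))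
    rw [hval] at hge
    exact EReal.coe_le_coe_iff.1 hge
  constructor
  · constructor
    · intro hMAA
      refine ⟨P1 hMAA, fun c hc => ⟨hc.1, fun g hg => ?_⟩⟩
      exact le_trans (hc.2 g hg) (EReal.coe_le_coe_iff.2 (P2 hMAA g hg))
    · rintro ⟨hCE, hsub⟩
      exact P5 hCE (P6 hsub)
  · constructor
    · intro hMAA
      refine ⟨P1 hMAA, fun c hc => ⟨hc.1, fun g hg => ?_⟩⟩
      exact le_trans (EReal.coe_le_coe_iff.2 (P2 hMAA g hg)) (hc.2 g hg)
    · rintro ⟨hCE, hsub⟩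
      exact P5 hCE (P7 hCE hsub)

end Paper
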